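/- arXiv:1404.6791 — 4 statements merged into one kernel-verified Lean document; each statement's English description precedes it below -/
import Mathlib

section
/- Fix β > 0 and t > 0, and let E_β denote the Mittag-Leffler function. Then limsup_{θ → ∞} (log log E_β(θ t)) / (log θ) ≤ 1/β. -/
/-- The Mittag-Leffler function with parameter `β`: `E_β(z) = ∑ n, z^n / Γ(nβ + 1)`. -/
noncomputable def mittagLeffler (β z : ℝ) : ℝ := ∑' n : ℕ, z ^ n / Real.Gamma (n * β + 1)

open Real Filter

lemma ml_gamma_ge_half {x : ℝ} (hx : 1 ≤ x) : 1/2 ≤ Real.Gamma x := by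
  have hpos : (0:ℝ) < x := by linarith
  rcases le_or_gt 2 x with h | h
  · have h2 : Real.Gamma 2 ≤ Real.Gamma x :=
      Real.Gamma_strictMonoOn_Ici.monotoneOn (by simp) (Set.mem_Ici.mpr h) h
    rw [Real.Gamma_two] at h2; linarith
  · have h1 : Real.Gamma 2 ≤ Real.Gamma (x + 1) :=
      Real.Gamma_strictMonoOn_Ici.monotoneOn (by simp) (Set.mem_Ici.mpr (by linarith))
        (by linarith)
    rw [Real.Gamma_add_one hpos.ne', Real.Gamma_two] at h1
    nlinarith [Real.Gamma_pos_of_pos hpos]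

lemma ml_term_le {β z : ℝ} (hβ : 0 < β) (hz : 1 ≤ z) (n : ℕ) :
    z ^ n / Real.Gamma (n * β + 1) ≤
      (4 * ((2:ℝ) ^ β) ^ (⌈1/β⌉₊) * z ^ (1/β) * Real.exp (2 * z ^ (1/β)))
        * ((2:ℝ) ^ (-β)) ^ n := by
  have hz0 : (0:ℝ) < z := lt_of_lt_of_le one_pos hz
  set w := z ^ (1/β) with hw_def
  have hw1 : 1 ≤ w := Real.one_le_rpow hz (by positivity)
  have hw0 : (0:ℝ) < w := lt_of_lt_of_le one_pos hw1
  have hΓpos : 0 < Real.Gamma ((n:ℝ) * β + 1) := Real.Gamma_pos_of_pos (by positivity)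
  have hexp1 : (1:ℝ) ≤ Real.exp (2 * w) := Real.one_le_exp (by positivity)
  have hP1 : (1:ℝ) ≤ ((2:ℝ) ^ β) ^ (⌈1/β⌉₊) :=
    one_le_pow₀ (Real.one_le_rpow one_le_two hβ.le)
  rcases le_or_gt 1 ((n:ℝ) * β) with hn | hn
  · -- main case : n*β ≥ 1
    set k := ⌊(n:ℝ) * β⌋₊ with hk_def
    have hk0 : (0:ℝ) ≤ (n:ℝ) * β := by positivity
    have hkle : (k:ℝ) ≤ (n:ℝ) * β := Nat.floor_le hk0
    have hklt : (n:ℝ) * β < k + 1 := Nat.lt_floor_add_one _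
    have hk1 : 1 ≤ k := Nat.le_floor (by exact_mod_cast hn)
    have hk1' : (1:ℝ) ≤ (k:ℝ) := by exact_mod_cast hk1
    have hΓ : (k.factorial : ℝ) ≤ Real.Gamma ((n:ℝ) * β + 1) := by
      rw [← Real.Gamma_nat_eq_factorial]
      exact Real.Gamma_strictMonoOn_Ici.monotoneOn
        (Set.mem_Ici.mpr (by linarith)) (Set.mem_Ici.mpr (by linarith)) (by linarith)
    have h1 : z ^ n ≤ w ^ (k + 1) := by
      have e : z ^ n = w ^ (((n:ℝ)) * β) := by
        rw [hw_def, ← Real.rpow_natCast z n, ← Real.rpow_mul hz0.le]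
        congr 1
        field_simp
      rw [e, ← Real.rpow_natCast w (k + 1)]
      apply Real.rpow_le_rpow_of_exponent_le hw1
      push_cast
      linarith
    have hup : (2 * w) ^ k / (k.factorial : ℝ) ≤ Real.exp (2 * w) :=
      Real.pow_div_factorial_le_exp (x := 2 * w) (by positivity) k
    have h2k : w ^ k / (k.factorial : ℝ) ≤ Real.exp (2 * w) / 2 ^ k := by
      rw [mul_pow] at hup
      rw [div_le_iff₀ (by positivity)] at hup
      rw [div_le_div_iff₀ (by positivity) (by positivity)]
      nlinarith [hup]
    have h3 : ((2:ℝ) ^ k)⁻¹ ≤ 2 * ((2:ℝ) ^ (-β)) ^ n := by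
      have e1 : ((2:ℝ) ^ k)⁻¹ = (2:ℝ) ^ (-(k:ℝ)) := by
        rw [← Real.rpow_natCast 2 k, ← Real.rpow_neg (by norm_num)]
      have e2 : (2:ℝ) * ((2:ℝ) ^ (-β)) ^ n = (2:ℝ) ^ (1 - (n:ℝ) * β) := by
        rw [← Real.rpow_natCast ((2:ℝ) ^ (-β)) n, ← Real.rpow_mul (by norm_num),
          Real.rpow_sub (by norm_num : (0:ℝ) < 2), Real.rpow_one,
          show -β * (n:ℝ) = -((n:ℝ) * β) by ring, Real.rpow_neg (by norm_num),
          div_eq_mul_inv]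
      rw [e1, e2]
      exact Real.rpow_le_rpow_of_exponent_le one_le_two (by linarith)
    have hr0 : (0:ℝ) ≤ ((2:ℝ) ^ (-β)) ^ n := by positivity
    calc z ^ n / Real.Gamma ((n:ℝ) * β + 1)
        ≤ w ^ (k + 1) / (k.factorial : ℝ) :=
          div_le_div₀ (by positivity) h1 (by positivity) hΓ
      _ = w * (w ^ k / (k.factorial : ℝ)) := by rw [pow_succ]; ring
      _ ≤ w * (Real.exp (2 * w) / 2 ^ k) := by
          exact mul_le_mul_of_nonneg_left h2k hw0.le
      _ = (w * Real.exp (2 * w)) * ((2:ℝ) ^ k)⁻¹ := by ring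
      _ ≤ (w * Real.exp (2 * w)) * (2 * ((2:ℝ) ^ (-β)) ^ n) :=
          mul_le_mul_of_nonneg_left h3 (mul_pos hw0 (Real.exp_pos _)).le
      _ = (2 * (w * Real.exp (2 * w))) * ((2:ℝ) ^ (-β)) ^ n := by ring
      _ ≤ (4 * ((2:ℝ) ^ β) ^ (⌈1/β⌉₊) * w * Real.exp (2 * w)) * ((2:ℝ) ^ (-β)) ^ n := by
          apply mul_le_mul_of_nonneg_right _ hr0
          have hA : 0 < w * Real.exp (2 * w) := mul_pos hw0 (Real.exp_pos _)
          nlinarith [mul_nonneg (by linarith : (0:ℝ) ≤ ((2:ℝ) ^ β) ^ (⌈1/β⌉₊) - 1) hA.le]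
  · -- head case : n*β < 1
    have hΓhalf : 1/2 ≤ Real.Gamma ((n:ℝ) * β + 1) := ml_gamma_ge_half (le_add_of_nonneg_left (by positivity))
    have hn' : (n:ℝ) ≤ 1/β := by
      rw [le_div_iff₀ hβ]
      linarith
    have hzn' : z ^ n ≤ w := by
      rw [← Real.rpow_natCast z n, hw_def]
      exact Real.rpow_le_rpow_of_exponent_le hz hn'
    have hterm : z ^ n / Real.Gamma ((n:ℝ) * β + 1) ≤ 2 * w := by
      rw [div_le_iff₀ hΓpos]
      nlinarith
    have hn_le : n ≤ ⌈1/β⌉₊ := by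
      have := hn'.trans (Nat.le_ceil (1/β))
      exact_mod_cast this
    have hQ : (1:ℝ) ≤ ((2:ℝ) ^ β) ^ (⌈1/β⌉₊) * ((2:ℝ) ^ (-β)) ^ n := by
      rw [← Real.rpow_natCast ((2:ℝ) ^ β) (⌈1/β⌉₊), ← Real.rpow_natCast ((2:ℝ) ^ (-β)) n,
        ← Real.rpow_mul (by norm_num), ← Real.rpow_mul (by norm_num),
        ← Real.rpow_add (by norm_num : (0:ℝ) < 2)]
      apply Real.one_le_rpow one_le_two
      have : (n:ℝ) ≤ (⌈1/β⌉₊ : ℝ) := by exact_mod_cast hn_le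
      nlinarith
    refine hterm.trans ?_
    have key : 2 * w ≤ (4 * w * Real.exp (2 * w)) *
        (((2:ℝ) ^ β) ^ (⌈1/β⌉₊) * ((2:ℝ) ^ (-β)) ^ n) := by
      have hA : (0:ℝ) ≤ 4 * w * Real.exp (2 * w) :=
        mul_nonneg (by linarith) (Real.exp_pos _).le
      nlinarith [mul_le_mul_of_nonneg_left hQ hA]
    calc 2 * w ≤ (4 * w * Real.exp (2 * w)) *
        (((2:ℝ) ^ β) ^ (⌈1/β⌉₊) * ((2:ℝ) ^ (-β)) ^ n) := key
      _ = (4 * ((2:ℝ) ^ β) ^ (⌈1/β⌉₊) * w * Real.exp (2 * w)) * ((2:ℝ) ^ (-β)) ^ n := by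
          ring

lemma ml_term_nonneg {β z : ℝ} (hβ : 0 < β) (hz0 : 0 < z) (n : ℕ) :
    0 ≤ z ^ n / Real.Gamma (n * β + 1) := by
  have : 0 < Real.Gamma ((n:ℝ) * β + 1) := Real.Gamma_pos_of_pos (by positivity)
  positivity

lemma ml_summable {β z : ℝ} (hβ : 0 < β) (hz : 1 ≤ z) :
    Summable (fun n : ℕ => z ^ n / Real.Gamma (n * β + 1)) := by
  have hr0 : (0:ℝ) ≤ (2:ℝ) ^ (-β) := by positivity
  have hr1 : (2:ℝ) ^ (-β) < 1 :=
    Real.rpow_lt_one_of_one_lt_of_neg one_lt_two (by linarith)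
  exact Summable.of_nonneg_of_le (ml_term_nonneg hβ (lt_of_lt_of_le one_pos hz))
    (ml_term_le hβ hz)
    ((summable_geometric_of_lt_one hr0 hr1).mul_left _)

lemma ml_le {β z : ℝ} (hβ : 0 < β) (hz : 1 ≤ z) :
    mittagLeffler β z ≤
      (4 * ((2:ℝ) ^ β) ^ (⌈1/β⌉₊) * (1 - (2:ℝ) ^ (-β))⁻¹) * z ^ (1/β)
        * Real.exp (2 * z ^ (1/β)) := by
  have hr0 : (0:ℝ) ≤ (2:ℝ) ^ (-β) := by positivity
  have hr1 : (2:ℝ) ^ (-β) < 1 :=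
    Real.rpow_lt_one_of_one_lt_of_neg one_lt_two (by linarith)
  have h := Summable.tsum_le_tsum (ml_term_le hβ hz) (ml_summable hβ hz)
    ((summable_geometric_of_lt_one hr0 hr1).mul_left _)
  rw [tsum_mul_left, tsum_geometric_of_lt_one hr0 hr1] at h
  refine h.trans_eq ?_
  ring

lemma ml_ge {β z : ℝ} (hβ : 0 < β) (hz : 1 ≤ z) :
    z / Real.Gamma (β + 1) ≤ mittagLeffler β z := by
  have h := Summable.le_tsum (ml_summable hβ hz) 1
    (fun j _ => ml_term_nonneg hβ (lt_of_lt_of_le one_pos hz) j)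
  simpa [mittagLeffler] using h

theorem mittagLeffler_limsup (β t : ℝ) (hβ : 0 < β) (ht : 0 < t) :
    Filter.limsup
      (fun θ : ℝ => Real.log (Real.log (mittagLeffler β (θ * t))) / Real.log θ)
      Filter.atTop ≤ 1 / β := by
  set c₁ : ℝ := 4 * ((2:ℝ) ^ β) ^ (⌈1/β⌉₊) * (1 - (2:ℝ) ^ (-β))⁻¹ with hc₁_def
  have hr0 : (0:ℝ) ≤ (2:ℝ) ^ (-β) := by positivity
  have hr1 : (2:ℝ) ^ (-β) < 1 :=
    Real.rpow_lt_one_of_one_lt_of_neg one_lt_two (by linarith)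
  have hP1 : (1:ℝ) ≤ ((2:ℝ) ^ β) ^ (⌈1/β⌉₊) :=
    one_le_pow₀ (Real.one_le_rpow one_le_two hβ.le)
  have hinv1 : (1:ℝ) ≤ (1 - (2:ℝ) ^ (-β))⁻¹ := by
    have hpos : (0:ℝ) < 1 - (2:ℝ) ^ (-β) := by linarith
    have hmul : (1 - (2:ℝ) ^ (-β)) * (1 - (2:ℝ) ^ (-β))⁻¹ = 1 := mul_inv_cancel₀ hpos.ne'
    nlinarith [inv_pos.mpr hpos, mul_nonneg hr0 (inv_pos.mpr hpos).le]
  have hc₁4 : (4:ℝ) ≤ c₁ := by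
    rw [hc₁_def]
    nlinarith [mul_le_mul hP1 hinv1 zero_le_one (by linarith : (0:ℝ) ≤ ((2:ℝ) ^ β) ^ (⌈1/β⌉₊))]
  have hc₁0 : (0:ℝ) < c₁ := by linarith
  set c₂ : ℝ := Real.log c₁ + 3 with hc₂_def
  have hlogc₁ : 0 ≤ Real.log c₁ := Real.log_nonneg (by linarith)
  have hc₂1 : (1:ℝ) ≤ c₂ := by rw [hc₂_def]; linarith
  have hc₂0 : (0:ℝ) < c₂ := by linarith
  -- the eventual estimate
  have main : ∀ c : ℝ, 1/β < c →
      ∀ᶠ θ : ℝ in atTop,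
        0 ≤ Real.log (Real.log (mittagLeffler β (θ * t))) / Real.log θ ∧
        Real.log (Real.log (mittagLeffler β (θ * t))) / Real.log θ ≤ c := by
    intro c hc
    have hcb : 0 < c - 1/β := by linarith
    have h4 : ∀ᶠ θ : ℝ in atTop,
        Real.log c₂ + (1/β) * Real.log t ≤ (c - 1/β) * Real.log θ :=
      (Real.tendsto_log_atTop.const_mul_atTop hcb).eventually_ge_atTop _
    filter_upwards [eventually_ge_atTop (1/t),
      eventually_ge_atTop (Real.Gamma (β + 1) * Real.exp (Real.exp 1) / t),
      eventually_gt_atTop (1:ℝ), h4] with θ hθ1 hθ2 hθ3 hθ4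
    set z := θ * t with hz_def
    have hz1 : 1 ≤ z := by
      rw [hz_def]
      rw [div_le_iff₀ ht] at hθ1
      linarith
    have hz0 : (0:ℝ) < z := lt_of_lt_of_le one_pos hz1
    set w := z ^ (1/β) with hw_def
    have hw1 : 1 ≤ w := Real.one_le_rpow hz1 (by positivity)
    have hw0 : (0:ℝ) < w := lt_of_lt_of_le one_pos hw1
    have hlogθ : 0 < Real.log θ := Real.log_pos hθ3
    set E := mittagLeffler β z with hE_def
    have hΓβ : 0 < Real.Gamma (β + 1) := Real.Gamma_pos_of_pos (by linarith)
    -- lower bound on E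
    have hzbig : Real.Gamma (β + 1) * Real.exp (Real.exp 1) ≤ z := by
      rw [hz_def]
      rw [div_le_iff₀ ht] at hθ2
      linarith
    have hE_lb : Real.exp (Real.exp 1) ≤ E := by
      refine le_trans ?_ (ml_ge hβ hz1)
      rw [le_div_iff₀ hΓβ]
      nlinarith
    have hE_pos : 0 < E := lt_of_lt_of_le (Real.exp_pos _) hE_lb
    have hlogE_lb : Real.exp 1 ≤ Real.log E := by
      rw [← Real.log_exp (Real.exp 1)]
      exact Real.log_le_log (Real.exp_pos _) hE_lb
    have hlogE_pos : 0 < Real.log E := lt_of_lt_of_le (Real.exp_pos 1) hlogE_lb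
    have hll_lb : 1 ≤ Real.log (Real.log E) := by
      rw [← Real.log_exp 1]
      exact Real.log_le_log (Real.exp_pos _) hlogE_lb
    -- upper bound on E
    have hE_ub : E ≤ c₁ * w * Real.exp (2 * w) := ml_le hβ hz1
    have hlogw : Real.log w = (1/β) * Real.log z := Real.log_rpow hz0 _
    have hlogE_ub : Real.log E ≤ Real.log c₁ + Real.log w + 2 * w := by
      calc Real.log E ≤ Real.log (c₁ * w * Real.exp (2 * w)) :=
            Real.log_le_log hE_pos hE_ub
        _ = Real.log c₁ + Real.log w + 2 * w := by
            rw [Real.log_mul (by positivity) (Real.exp_ne_zero _),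
              Real.log_mul hc₁0.ne' hw0.ne', Real.log_exp]
    have hlogE_ub2 : Real.log E ≤ c₂ * w := by
      have hlw : Real.log w ≤ w := by
        have := Real.log_le_sub_one_of_pos hw0
        linarith
      rw [hc₂_def]
      nlinarith
    have hll_ub : Real.log (Real.log E) ≤
        Real.log c₂ + (1/β) * (Real.log θ + Real.log t) := by
      calc Real.log (Real.log E) ≤ Real.log (c₂ * w) :=
            Real.log_le_log hlogE_pos hlogE_ub2
        _ = Real.log c₂ + Real.log w := Real.log_mul hc₂0.ne' hw0.ne'
        _ = Real.log c₂ + (1/β) * Real.log z := by rw [hlogw]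
        _ = Real.log c₂ + (1/β) * (Real.log θ + Real.log t) := by
            rw [hz_def, Real.log_mul (by linarith) ht.ne']
    constructor
    · exact div_nonneg (by linarith) hlogθ.le
    · rw [div_le_iff₀ hlogθ]
      have hring : (c - 1/β) * Real.log θ + (1/β) * Real.log θ = c * Real.log θ := by ring
      linarith [hll_ub, hθ4]
  refine le_of_forall_gt_imp_ge_of_dense fun c hc => ?_
  have h := main c hc
  exact Filter.limsup_le_of_le
    (Filter.isCoboundedUnder_le_of_eventually_le atTop (h.mono fun θ hθ => hθ.1))
    (h.mono fun θ hθ => hθ.2)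
end

section
/- Fix ρ > 0 and t > 0, and define S(u) := Σ_{k=1}^∞ (u / k^ρ)^k for u > 0. Then liminf_{θ → ∞} (log log S(θ t)) / (log θ) ≥ 1/ρ. -/
open Filter Real

lemma aux_summable (ρ u : ℝ) (hρ : 0 < ρ) (hu : 0 < u) :
    Summable (fun k : ℕ => (u / ((k : ℝ) + 1) ^ ρ) ^ (k + 1)) := by
  apply summable_of_isBigO_nat summable_geometric_two
  rw [Asymptotics.isBigO_iff]
  refine ⟨1, ?_⟩
  have htend : Tendsto (fun k : ℕ => ((k : ℝ) + 1) ^ ρ) atTop atTop :=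
    (tendsto_rpow_atTop hρ).comp
      (tendsto_atTop_add_const_right atTop 1 tendsto_natCast_atTop_atTop)
  filter_upwards [htend.eventually_ge_atTop (2 * u)] with k hk
  have hkpos : (0 : ℝ) < ((k : ℝ) + 1) ^ ρ := by positivity
  have hbase : u / ((k : ℝ) + 1) ^ ρ ≤ 1 / 2 := by
    rw [div_le_div_iff₀ hkpos (by norm_num)]
    linarith
  have hbase0 : 0 ≤ u / ((k : ℝ) + 1) ^ ρ := by positivity
  have h1 : (u / ((k : ℝ) + 1) ^ ρ) ^ (k + 1) ≤ (1 / 2 : ℝ) ^ (k + 1) :=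
    pow_le_pow_left₀ hbase0 hbase _
  have h2 : ((1 / 2 : ℝ)) ^ (k + 1) ≤ (1 / 2 : ℝ) ^ k :=
    pow_le_pow_of_le_one (by norm_num) (by norm_num) (by omega)
  rw [Real.norm_eq_abs, Real.norm_eq_abs, abs_of_nonneg (by positivity),
    abs_of_nonneg (by positivity : (0:ℝ) ≤ (1/2:ℝ)^k), one_mul]
  exact h1.trans h2

lemma aux_geom_summable : Summable (fun k : ℕ => (1/2 : ℝ) ^ (k + 1)) := by
  simpa [pow_succ] using summable_geometric_two.mul_right (1/2 : ℝ)

lemma aux_geom_tsum : (∑' k : ℕ, (1/2 : ℝ) ^ (k + 1)) = 1 := by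
  have h' : (∑' k : ℕ, (1/2 : ℝ) ^ k * (1/2)) = 2 * (1/2) := by
    rw [tsum_mul_right, tsum_geometric_two]
  simpa [pow_succ] using h'

set_option maxHeartbeats 1600000 in
theorem sum_liminf (ρ t : ℝ) (hρ : 0 < ρ) (ht : 0 < t) :
    1 / ρ ≤ Filter.liminf
      (fun θ : ℝ =>
        Real.log (Real.log (∑' k : ℕ, (θ * t / ((k : ℝ) + 1) ^ ρ) ^ (k + 1))) / Real.log θ)
      Filter.atTop := by
  set f : ℝ → ℝ := fun θ =>
    Real.log (Real.log (∑' k : ℕ, (θ * t / ((k : ℝ) + 1) ^ ρ) ^ (k + 1))) / Real.log θ with hf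
  set C : ℝ := (1 / ρ) * (Real.log t - 1) - Real.log 2 with hC
  set D : ℝ := Real.log 2 + (1 / ρ) * Real.log 2 + (1 / ρ) * Real.log t + Real.log t with hD
  set B : ℝ := 2 + 1 / ρ with hB
  set g : ℝ → ℝ := fun θ => 1 / ρ + C / Real.log θ with hg
  have hρ' : ρ ≠ 0 := ne_of_gt hρ
  -- g tends to 1/ρ
  have hgt : Tendsto g atTop (nhds (1 / ρ)) := by
    have h0 : Tendsto (fun θ : ℝ => C / Real.log θ) atTop (nhds 0) := by
      simpa [div_eq_mul_inv] using (Real.tendsto_log_atTop.inv_tendsto_atTop).const_mul C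
    rw [hg]
    have h1 : Tendsto (fun _ : ℝ => 1 / ρ) atTop (nhds (1 / ρ)) := tendsto_const_nhds
    simpa using h1.add h0
  -- tendency of θ * t
  have hut : Tendsto (fun θ : ℝ => θ * t) atTop atTop :=
    Tendsto.atTop_mul_const ht tendsto_id
  have hx_t : Tendsto (fun θ : ℝ => (θ * t / Real.exp 1) ^ (1 / ρ)) atTop atTop :=
    (tendsto_rpow_atTop (by positivity)).comp (hut.atTop_div_const (Real.exp_pos 1))
  -- the main eventual estimate
  have hmain : ∀ᶠ θ : ℝ in atTop, g θ ≤ f θ ∧ f θ ≤ B := by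
    filter_upwards [eventually_gt_atTop (0 : ℝ),
      Real.tendsto_log_atTop.eventually_ge_atTop 1,
      Real.tendsto_log_atTop.eventually_ge_atTop D,
      hx_t.eventually_ge_atTop 2,
      hut.eventually_ge_atTop 1] with θ hθ0 hlog1 hlogD hx2 hu1
    have hlogθ : (0 : ℝ) < Real.log θ := by linarith
    set u : ℝ := θ * t with hu
    have hu0 : 0 < u := by positivity
    have hsum := aux_summable ρ u hρ hu0
    set S : ℝ := ∑' k : ℕ, (u / ((k : ℝ) + 1) ^ ρ) ^ (k + 1) with hS
    have hfθ : f θ = Real.log (Real.log S) / Real.log θ := rfl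
    have hterm_nonneg : ∀ k : ℕ, 0 ≤ (u / ((k : ℝ) + 1) ^ ρ) ^ (k + 1) := by
      intro k
      have : (0:ℝ) < ((k : ℝ) + 1) ^ ρ := by positivity
      positivity
    set x : ℝ := (u / Real.exp 1) ^ (1 / ρ) with hxdef
    have hx0 : 0 < x := by positivity
    set n : ℕ := ⌊x⌋₊ with hn
    have hn2 : 2 ≤ n := Nat.le_floor (by exact_mod_cast hx2)
    have hnx : (n : ℝ) ≤ x := Nat.floor_le hx0.le
    have hxn : x ≤ (n : ℝ) + 1 := (Nat.lt_floor_add_one x).le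
    have hnpos : (0 : ℝ) < (n : ℝ) := by
      have : (0:ℕ) < n := by omega
      exact_mod_cast this
    -- key: x ^ ρ = u / e
    have hxρ : x ^ ρ = u / Real.exp 1 := by
      rw [hxdef, ← Real.rpow_mul (by positivity), one_div, inv_mul_cancel₀ hρ', Real.rpow_one]
    ------------------------------------------------------------------
    -- LOWER BOUND
    ------------------------------------------------------------------
    have hnρ : (n : ℝ) ^ ρ ≤ u / Real.exp 1 := by
      rw [← hxρ]
      exact Real.rpow_le_rpow hnpos.le hnx hρ.le
    have hnρ0 : (0:ℝ) < (n : ℝ) ^ ρ := Real.rpow_pos_of_pos hnpos ρ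
    have hbase_ge : Real.exp 1 ≤ u / (n : ℝ) ^ ρ := by
      rw [le_div_iff₀ hnρ0]
      have h := (le_div_iff₀ (Real.exp_pos 1)).mp hnρ
      calc Real.exp 1 * (n : ℝ) ^ ρ = (n : ℝ) ^ ρ * Real.exp 1 := mul_comm _ _
        _ ≤ u := h
    have hterm_ge : Real.exp 1 ^ n ≤ (u / (n : ℝ) ^ ρ) ^ n :=
      pow_le_pow_left₀ (Real.exp_pos 1).le hbase_ge n
    have hSterm : (u / (n : ℝ) ^ ρ) ^ n ≤ S := by
      have hle := Summable.le_tsum hsum (n - 1) (fun k _ => hterm_nonneg k)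
      have hcast : ((↑(n - 1) : ℝ) + 1) = (n : ℝ) := by
        have h' : n - 1 + 1 = n := by omega
        exact_mod_cast congrArg (Nat.cast : ℕ → ℝ) h'
      have hexp : n - 1 + 1 = n := by omega
      rw [hcast, hexp] at hle
      exact hle
    have hexpS : Real.exp (n : ℝ) ≤ S := by
      have hpow : Real.exp 1 ^ n = Real.exp (n : ℝ) := by
        rw [← Real.exp_nat_mul]; ring_nf
      rw [← hpow]
      exact hterm_ge.trans hSterm
    have hlogS : (n : ℝ) ≤ Real.log S := by
      calc (n : ℝ) = Real.log (Real.exp (n : ℝ)) := (Real.log_exp _).symm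
        _ ≤ Real.log S := Real.log_le_log (Real.exp_pos _) hexpS
    have hlogSpos : 0 < Real.log S := lt_of_lt_of_le hnpos hlogS
    have hSpos : 0 < S := lt_of_lt_of_le (Real.exp_pos _) hexpS
    have hx2n : x / 2 ≤ (n : ℝ) := by linarith
    have hloglogS_lb : Real.log (x / 2) ≤ Real.log (Real.log S) :=
      Real.log_le_log (by positivity) (hx2n.trans hlogS)
    have hlogx : Real.log x = (1 / ρ) * (Real.log θ + Real.log t - 1) := by
      rw [hxdef, Real.log_rpow (by positivity), Real.log_div (ne_of_gt hu0) (Real.exp_ne_zero 1),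
        Real.log_exp, hu, Real.log_mul (ne_of_gt hθ0) (ne_of_gt ht)]
    have hlogx2 : Real.log (x / 2) = (1 / ρ) * (Real.log θ + Real.log t - 1) - Real.log 2 := by
      rw [Real.log_div (ne_of_gt hx0) (by norm_num), hlogx]
    have hglef : g θ ≤ f θ := by
      have heq : g θ = ((1 / ρ) * (Real.log θ + Real.log t - 1) - Real.log 2) / Real.log θ := by
        rw [hg, hC]
        field_simp
        ring
      rw [heq, hfθ]
      rw [div_le_div_iff_of_pos_right hlogθ, ← hlogx2]
      exact hloglogS_lb
    ------------------------------------------------------------------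
    -- UPPER BOUND
    ------------------------------------------------------------------
    have hfleB : f θ ≤ B := by
      set K : ℕ := ⌈(2 * u) ^ (1 / ρ)⌉₊ with hK
      have h2u1 : (1:ℝ) ≤ 2 * u := by linarith
      have hrpos : (0:ℝ) < (2 * u) ^ (1 / ρ) := by positivity
      have hxK : (1:ℝ) ≤ (2 * u) ^ (1 / ρ) := Real.one_le_rpow h2u1 (by positivity)
      have hKge : (2 * u) ^ (1 / ρ) ≤ (K : ℝ) := Nat.le_ceil _
      have hKle : (K : ℝ) ≤ (2 * u) ^ (1 / ρ) + 1 := (Nat.ceil_lt_add_one hrpos.le).le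
      have hKpos : (0:ℝ) ≤ (K : ℝ) := Nat.cast_nonneg K
      -- tail bound
      have htail : ∀ k : ℕ,
          (u / ((↑(k + K) : ℝ) + 1) ^ ρ) ^ (k + K + 1) ≤ (1/2 : ℝ) ^ (k + 1) := by
        intro k
        have hk1 : (K : ℝ) ≤ (↑(k + K) : ℝ) + 1 := by
          push_cast
          linarith [(Nat.cast_nonneg k : (0:ℝ) ≤ (k:ℝ))]
        have h2uk : 2 * u ≤ ((↑(k + K) : ℝ) + 1) ^ ρ := by
          calc 2 * u = ((2 * u) ^ (1 / ρ)) ^ ρ := by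
                rw [← Real.rpow_mul (by positivity), one_div, inv_mul_cancel₀ hρ',
                  Real.rpow_one]
            _ ≤ _ := Real.rpow_le_rpow hrpos.le (hKge.trans hk1) hρ.le
        have hkpos : (0:ℝ) < ((↑(k + K) : ℝ) + 1) ^ ρ := by positivity
        have hbase : u / ((↑(k + K) : ℝ) + 1) ^ ρ ≤ 1/2 := by
          rw [div_le_div_iff₀ hkpos (by norm_num)]
          linarith
        calc (u / ((↑(k + K) : ℝ) + 1) ^ ρ) ^ (k + K + 1)
            ≤ (1/2 : ℝ) ^ (k + K + 1) := pow_le_pow_left₀ (by positivity) hbase _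
          _ ≤ (1/2 : ℝ) ^ (k + 1) :=
              pow_le_pow_of_le_one (by norm_num) (by norm_num) (by omega)
      have hgsum := aux_geom_summable
      have hgsum_tsum := aux_geom_tsum
      have htsum_tail : (∑' k : ℕ, (u / ((↑(k + K) : ℝ) + 1) ^ ρ) ^ (k + K + 1)) ≤ 1 := by
        have := Summable.tsum_le_tsum htail ((summable_nat_add_iff K).mpr hsum) hgsum
        rwa [hgsum_tsum] at this
      -- head bound
      have hhead : (∑ k ∈ Finset.range K, (u / ((k : ℝ) + 1) ^ ρ) ^ (k + 1))
          ≤ (K : ℝ) * u ^ K := by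
        have hterm : ∀ k ∈ Finset.range K, (u / ((k : ℝ) + 1) ^ ρ) ^ (k + 1) ≤ u ^ K := by
          intro k hk
          have hk1 : (1:ℝ) ≤ ((k : ℝ) + 1) ^ ρ :=
            Real.one_le_rpow (by linarith [(Nat.cast_nonneg k : (0:ℝ) ≤ (k:ℝ))]) hρ.le
          have hbase : u / ((k : ℝ) + 1) ^ ρ ≤ u :=
            div_le_self hu0.le hk1
          calc (u / ((k : ℝ) + 1) ^ ρ) ^ (k + 1)
              ≤ u ^ (k + 1) := pow_le_pow_left₀ (by positivity) hbase _
            _ ≤ u ^ K := pow_le_pow_right₀ hu1 (Finset.mem_range.mp hk)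
        calc (∑ k ∈ Finset.range K, (u / ((k : ℝ) + 1) ^ ρ) ^ (k + 1))
            ≤ ∑ _k ∈ Finset.range K, u ^ K := Finset.sum_le_sum hterm
          _ = (K : ℝ) * u ^ K := by
              rw [Finset.sum_const, Finset.card_range, nsmul_eq_mul]
      have hsplit : (∑ k ∈ Finset.range K, (u / ((k : ℝ) + 1) ^ ρ) ^ (k + 1))
          + (∑' k : ℕ, (u / ((↑(k + K) : ℝ) + 1) ^ ρ) ^ (k + K + 1)) = S :=
        Summable.sum_add_tsum_nat_add K hsum
      have huK1 : (1:ℝ) ≤ u ^ K := one_le_pow₀ hu1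
      have hSA : S ≤ ((K : ℝ) + 1) * u ^ K := by
        have hid : ((K : ℝ) + 1) * u ^ K = (K : ℝ) * u ^ K + u ^ K := by ring
        rw [hid]
        linarith [hsplit, hhead, htsum_tail]
      have hSApos : (0:ℝ) < ((K : ℝ) + 1) * u ^ K := by positivity
      have hlogS_ub : Real.log S ≤ Real.log ((K : ℝ) + 1) + (K : ℝ) * Real.log u := by
        calc Real.log S ≤ Real.log (((K : ℝ) + 1) * u ^ K) := Real.log_le_log hSpos hSA
          _ = Real.log ((K : ℝ) + 1) + Real.log (u ^ K) :=
              Real.log_mul (by positivity) (by positivity)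
          _ = _ := by rw [Real.log_pow]
      have hlogK1 : Real.log ((K : ℝ) + 1) ≤ (K : ℝ) := by
        have := Real.log_le_sub_one_of_pos (x := (K : ℝ) + 1) (by positivity)
        linarith
      have hlogu : Real.log u ≤ u - 1 := Real.log_le_sub_one_of_pos hu0
      set M : ℝ := 2 * (2 * u) ^ (1 / ρ) * u with hM
      have hMpos : 0 < M := by positivity
      have hlogS_M : Real.log S ≤ M := by
        have h1 : (K : ℝ) * Real.log u ≤ (K : ℝ) * (u - 1) :=
          mul_le_mul_of_nonneg_left hlogu hKpos
        have h2 : Real.log S ≤ (K : ℝ) * u := by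
          have hid : (K : ℝ) * (u - 1) = (K : ℝ) * u - (K : ℝ) := by ring
          linarith
        have h3 : (K : ℝ) * u ≤ M := by
          rw [hM]
          have hK2 : (K : ℝ) ≤ 2 * (2 * u) ^ (1 / ρ) := by linarith
          exact mul_le_mul_of_nonneg_right hK2 hu0.le
        linarith
      have hloglog_ub : Real.log (Real.log S) ≤ Real.log M :=
        Real.log_le_log hlogSpos hlogS_M
      have hlogM : Real.log M
          = Real.log 2 + (1 / ρ) * (Real.log 2 + Real.log u) + Real.log u := by
        rw [hM, Real.log_mul (by positivity) (ne_of_gt hu0),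
          Real.log_mul (by norm_num) (ne_of_gt hrpos),
          Real.log_rpow (by positivity), Real.log_mul (by norm_num) (ne_of_gt hu0)]
      have hlogu_split : Real.log u = Real.log θ + Real.log t := by
        rw [hu, Real.log_mul (ne_of_gt hθ0) (ne_of_gt ht)]
      have hlogM2 : Real.log M = (1 + 1 / ρ) * Real.log θ + D := by
        rw [hlogM, hlogu_split, hD]
        ring
      rw [hfθ, div_le_iff₀ hlogθ, hB]
      calc Real.log (Real.log S) ≤ (1 + 1 / ρ) * Real.log θ + D := by
            rw [← hlogM2]; exact hloglog_ub
        _ ≤ (1 + 1 / ρ) * Real.log θ + Real.log θ := add_le_add_right hlogD _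
        _ = (2 + 1 / ρ) * Real.log θ := by ring
    exact ⟨hglef, hfleB⟩
  -- conclude
  have hcb : IsCoboundedUnder (· ≥ ·) atTop f :=
    isCoboundedUnder_ge_of_eventually_le atTop (hmain.mono fun θ h => h.2)
  have hbd : IsBoundedUnder (· ≥ ·) atTop g := hgt.isBoundedUnder_ge
  have h1 : liminf g atTop ≤ liminf f atTop :=
    Filter.liminf_le_liminf (hmain.mono fun θ h => h.1) hbd hcb
  rwa [hgt.liminf_eq] at h1
end

section
/- Let β > 0, κ > 0, t > 0 and let f : [0,t] → ℝ be a nonnegative integrable function. Then lim_{n → ∞} ((κ Γ(β))^n / Γ(nβ)) ∫₀ᵗ (t−s)^{nβ−1} f(s) ds = 0, where Γ is the real Gamma function. -/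
open MeasureTheory Filter

lemma aux_pow_div_gamma_tendsto (β A : ℝ) (hβ : 0 < β) (hA : 0 < A) :
    Filter.Tendsto (fun n : ℕ => A ^ n / Real.Gamma ((n : ℝ) * β)) Filter.atTop (nhds 0) := by
  set L : ℝ := max 1 (A ^ (1 / β)) with hLdef
  have hL1 : (1 : ℝ) ≤ L := le_max_left _ _
  have hL0 : (0 : ℝ) < L := lt_of_lt_of_le one_pos hL1
  have hg : Tendsto (fun j : ℕ => L ^ 2 * (L ^ j / (j.factorial : ℝ))) atTop (nhds 0) := by
    have := (FloorSemiring.tendsto_pow_div_factorial_atTop (K := ℝ) L).const_mul (L ^ 2)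
    simpa using this
  have hnb : Tendsto (fun n : ℕ => (n : ℝ) * β) atTop atTop :=
    Tendsto.atTop_mul_const hβ tendsto_natCast_atTop_atTop
  have hm : Tendsto (fun n : ℕ => ⌊(n : ℝ) * β⌋₊ - 1) atTop atTop :=
    (tendsto_sub_atTop_nat 1).comp (tendsto_nat_floor_atTop.comp hnb)
  have hcomp := hg.comp hm
  apply squeeze_zero' ?_ ?_ hcomp
  · filter_upwards [eventually_ge_atTop 1] with n hn
    have hnb0 : 0 < (n : ℝ) * β := by
      have : (1 : ℝ) ≤ (n : ℝ) := by exact_mod_cast hn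
      nlinarith
    exact div_nonneg (pow_nonneg hA.le n) (Real.Gamma_pos_of_pos hnb0).le
  · filter_upwards [hnb.eventually_ge_atTop 2] with n hn2
    set x := (n : ℝ) * β with hx
    set m := ⌊x⌋₊ with hmdef
    have hx0 : (0 : ℝ) ≤ x := by linarith
    have hm2 : 2 ≤ m := Nat.le_floor (by exact_mod_cast hn2)
    have hmle : (m : ℝ) ≤ x := Nat.floor_le hx0
    have hltm : x < (m : ℝ) + 1 := Nat.lt_floor_add_one x
    -- Gamma lower bound
    have hΓ : ((m - 1).factorial : ℝ) ≤ Real.Gamma x := by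
      have hm2' : (2 : ℝ) ≤ (m : ℝ) := by exact_mod_cast hm2
      have h1 : Real.Gamma ((m : ℝ)) ≤ Real.Gamma x := by
        rcases eq_or_lt_of_le hmle with h | h
        · rw [h]
        · exact (Real.Gamma_strictMonoOn_Ici (Set.mem_Ici.mpr hm2')
            (Set.mem_Ici.mpr (le_trans hm2' hmle)) h).le
      have hm1 : m - 1 + 1 = m := Nat.succ_pred_eq_of_pos (lt_of_lt_of_le (by norm_num) hm2)
      have h2 : Real.Gamma ((m : ℝ)) = ((m - 1).factorial : ℝ) := by
        have hcast : ((m : ℝ)) = ((m - 1 : ℕ) : ℝ) + 1 := by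
          exact_mod_cast hm1.symm
        rw [hcast, Real.Gamma_nat_eq_factorial]
      linarith
    -- power upper bound
    have hApow : A ^ n ≤ L ^ (m + 1) := by
      have e1 : (A ^ (1 / β)) ^ x = A ^ n := by
        rw [← Real.rpow_natCast A n, ← Real.rpow_mul hA.le]
        congr 1
        field_simp [hx]
        rw [hx]; ring
      have e2 : (A ^ (1 / β)) ^ x ≤ L ^ x :=
        Real.rpow_le_rpow (Real.rpow_nonneg hA.le _) (le_max_right _ _) hx0
      have e3 : L ^ x ≤ L ^ ((m : ℝ) + 1) :=
        Real.rpow_le_rpow_of_exponent_le hL1 hltm.le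
      have e4 : L ^ ((m : ℝ) + 1) = L ^ (m + 1) := by
        rw [← Real.rpow_natCast L (m + 1)]; push_cast; ring_nf
      calc A ^ n = (A ^ (1 / β)) ^ x := e1.symm
        _ ≤ L ^ x := e2
        _ ≤ L ^ ((m : ℝ) + 1) := e3
        _ = L ^ (m + 1) := e4
    have hfacpos : (0 : ℝ) < ((m - 1).factorial : ℝ) := by positivity
    have key : A ^ n / Real.Gamma x ≤ L ^ (m + 1) / ((m - 1).factorial : ℝ) :=
      div_le_div₀ (by positivity) hApow hfacpos hΓ
    have : L ^ (m + 1) / ((m - 1).factorial : ℝ) = L ^ 2 * (L ^ (m - 1) / ((m - 1).factorial : ℝ)) := by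
      have h5 : m + 1 = (m - 1) + 2 := by omega
      rw [h5, pow_add]
      ring
    rw [this] at key
    exact key

theorem iterated_kernel_tendsto_zero (β κ t : ℝ) (hβ : 0 < β) (hκ : 0 < κ) (ht : 0 < t)
    (f : ℝ → ℝ) (hf_nonneg : ∀ s ∈ Set.Icc (0 : ℝ) t, 0 ≤ f s)
    (hf : IntegrableOn f (Set.Icc (0 : ℝ) t)) :
    Filter.Tendsto
      (fun n : ℕ => (κ * Real.Gamma β) ^ n / Real.Gamma (n * β)
        * ∫ s in (0 : ℝ)..t, (t - s) ^ ((n : ℝ) * β - 1) * f s)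
      Filter.atTop (nhds 0) := by
  set K := κ * Real.Gamma β with hKdef
  have hK0 : 0 < K := mul_pos hκ (Real.Gamma_pos_of_pos hβ)
  set A := K * t ^ β with hAdef
  have hA0 : 0 < A := mul_pos hK0 (Real.rpow_pos_of_pos ht β)
  set M := ∫ s in (0 : ℝ)..t, f s with hMdef
  have hM0 : 0 ≤ M :=
    intervalIntegral.integral_nonneg ht.le (fun s hs => hf_nonneg s hs)
  have haux := (aux_pow_div_gamma_tendsto β A hβ hA0).mul_const (M / t)
  rw [zero_mul] at haux
  have hnb : Tendsto (fun n : ℕ => (n : ℝ) * β) atTop atTop :=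
    Tendsto.atTop_mul_const hβ tendsto_natCast_atTop_atTop
  have hf' : IntegrableOn f (Set.Ioc 0 t) := hf.mono_set Set.Ioc_subset_Icc_self
  apply squeeze_zero' ?_ ?_ haux
  · -- nonnegativity
    filter_upwards [eventually_ge_atTop 1] with n hn
    have hnb0 : 0 < (n : ℝ) * β := by
      have : (1 : ℝ) ≤ (n : ℝ) := by exact_mod_cast hn
      nlinarith
    have hc : 0 ≤ K ^ n / Real.Gamma ((n : ℝ) * β) :=
      div_nonneg (pow_nonneg hK0.le n) (Real.Gamma_pos_of_pos hnb0).le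
    have hJ : 0 ≤ ∫ s in (0 : ℝ)..t, (t - s) ^ ((n : ℝ) * β - 1) * f s := by
      apply intervalIntegral.integral_nonneg ht.le
      intro s hs
      exact mul_nonneg (Real.rpow_nonneg (sub_nonneg.mpr hs.2) _) (hf_nonneg s hs)
    exact mul_nonneg hc hJ
  · -- upper bound
    filter_upwards [eventually_ge_atTop 1, hnb.eventually_ge_atTop 1] with n hn hnb1
    set e := (n : ℝ) * β - 1 with hedef
    have he0 : 0 ≤ e := by simp [hedef]; linarith
    have hnb0 : 0 < (n : ℝ) * β := by linarith
    have hc : 0 ≤ K ^ n / Real.Gamma ((n : ℝ) * β) :=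
      div_nonneg (pow_nonneg hK0.le n) (Real.Gamma_pos_of_pos hnb0).le
    -- integrability of the product
    have hgmeas : AEStronglyMeasurable (fun s : ℝ => (t - s) ^ e)
        (volume.restrict (Set.Ioc 0 t)) := by
      exact ((Real.continuous_rpow_const he0).comp
        (continuous_const.sub continuous_id)).measurable.aestronglyMeasurable
    have hbound : ∀ᵐ s ∂(volume.restrict (Set.Ioc (0:ℝ) t)), ‖(t - s) ^ e‖ ≤ t ^ e := by
      rw [ae_restrict_iff' measurableSet_Ioc]
      filter_upwards with s hs
      have h1 : 0 ≤ t - s := sub_nonneg.mpr hs.2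
      rw [Real.norm_eq_abs, abs_of_nonneg (Real.rpow_nonneg h1 _)]
      exact Real.rpow_le_rpow h1 (by linarith [hs.1]) he0
    have hgf : IntegrableOn (fun s => (t - s) ^ e * f s) (Set.Ioc 0 t) :=
      Integrable.bdd_mul hf' hgmeas hbound
    have htf : IntegrableOn (fun s => t ^ e * f s) (Set.Ioc 0 t) := hf'.const_mul _
    have hJle : (∫ s in (0 : ℝ)..t, (t - s) ^ e * f s) ≤ t ^ e * M := by
      rw [intervalIntegral.integral_of_le ht.le, hMdef,
        intervalIntegral.integral_of_le ht.le]
      rw [← MeasureTheory.integral_const_mul]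
      apply MeasureTheory.setIntegral_mono_on hgf htf measurableSet_Ioc
      intro s hs
      have h1 : 0 ≤ t - s := sub_nonneg.mpr hs.2
      exact mul_le_mul_of_nonneg_right
        (Real.rpow_le_rpow h1 (by linarith [hs.1]) he0)
        (hf_nonneg s ⟨hs.1.le, hs.2⟩)
    have hterm : K ^ n / Real.Gamma ((n : ℝ) * β)
        * ∫ s in (0 : ℝ)..t, (t - s) ^ e * f s
        ≤ K ^ n / Real.Gamma ((n : ℝ) * β) * (t ^ e * M) :=
      mul_le_mul_of_nonneg_left hJle hc
    have hAn : A ^ n = K ^ n * t ^ ((n : ℝ) * β) := by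
      rw [hAdef, mul_pow, ← Real.rpow_natCast (t ^ β) n, ← Real.rpow_mul ht.le,
        mul_comm β (n : ℝ)]
    have hte : t ^ e = t ^ ((n : ℝ) * β) / t := by
      rw [hedef, Real.rpow_sub ht, Real.rpow_one]
    calc K ^ n / Real.Gamma ((n : ℝ) * β)
        * ∫ s in (0 : ℝ)..t, (t - s) ^ e * f s
        ≤ K ^ n / Real.Gamma ((n : ℝ) * β) * (t ^ e * M) := hterm
      _ = A ^ n / Real.Gamma ((n : ℝ) * β) * (M / t) := by
          rw [hAn, hte]; ring
end

section
/- Let β > 0, T > 0, κ > 0 and c₁ > 0, and suppose f : [0,T] → ℝ is nonnegative, integrable, and satisfies f(t) ≤ c₁ + κ ∫₀ᵗ (t−s)^{β−1} f(s) ds for all t ∈ [0,T]. Then for every integer n ≥ 1 and every t ∈ [0,T], f(t) ≤ c₁ Σ_{k=0}^{n−1} (κ Γ(β))^k t^{kβ} / Γ(kβ + 1) + ((κ Γ(β))^n / Γ(nβ)) ∫₀ᵗ (t−s)^{nβ−1} f(s) ds, where Γ is the real Gamma function. -/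
open MeasureTheory intervalIntegral
open scoped ENNReal

lemma beta_integrable {a b : ℝ} (ha : 0 < a) (hb : 0 < b) :
    IntervalIntegrable (fun x : ℝ => x ^ (a - 1) * (1 - x) ^ (b - 1)) volume 0 1 := by
  have h := (Complex.betaIntegral_convergent (u := a) (v := b) (by simpa) (by simpa)).norm
  refine ⟨(h.1).congr ?_, by simp [IntegrableOn]⟩
  filter_upwards [ae_restrict_mem measurableSet_Ioc] with x hx
  have hx0 : (0:ℝ) ≤ x := le_of_lt hx.1
  have hx1 : (0:ℝ) ≤ 1 - x := by linarith [hx.2]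
  have e1 : (x:ℂ) ^ ((a:ℂ) - 1) = ((x ^ (a-1) : ℝ) : ℂ) := by
    rw [Complex.ofReal_cpow hx0]; push_cast; ring_nf
  have e2 : ((1 - x : ℂ)) ^ ((b:ℂ) - 1) = ((((1:ℝ) - x) ^ (b-1) : ℝ) : ℂ) := by
    rw [show ((1 - x : ℂ)) = (((1 - x : ℝ) : ℂ)) by push_cast; ring,
      Complex.ofReal_cpow hx1]; push_cast; ring_nf
  simp only [e1, e2, ← Complex.ofReal_mul, Complex.norm_real, Real.norm_eq_abs]
  exact abs_of_nonneg (mul_nonneg (Real.rpow_nonneg hx0 _) (Real.rpow_nonneg hx1 _))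

lemma beta_value {a b : ℝ} (ha : 0 < a) (hb : 0 < b) :
    ∫ x in (0:ℝ)..1, x ^ (a - 1) * (1 - x) ^ (b - 1)
      = Real.Gamma a * Real.Gamma b / Real.Gamma (a + b) := by
  have key : Complex.Gamma a * Complex.Gamma b
      = Complex.Gamma (a + b) * Complex.betaIntegral a b :=
    Complex.Gamma_mul_Gamma_eq_betaIntegral (by simpa) (by simpa)
  have hB : Complex.betaIntegral a b
      = ((∫ x in (0:ℝ)..1, x ^ (a - 1) * (1 - x) ^ (b - 1) : ℝ) : ℂ) := by
    rw [Complex.betaIntegral, ← intervalIntegral.integral_ofReal]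
    refine intervalIntegral.integral_congr fun x hx => ?_
    rw [Set.uIcc_of_le (by norm_num : (0:ℝ) ≤ 1)] at hx
    have hx0 : (0:ℝ) ≤ x := hx.1
    have hx1 : (0:ℝ) ≤ 1 - x := by linarith [hx.2]
    rw [show ((1 - x : ℂ)) = (((1 - x : ℝ) : ℂ)) by push_cast; ring,
      show ((a:ℂ) - 1) = ((a - 1 : ℝ) : ℂ) by push_cast; ring,
      show ((b:ℂ) - 1) = ((b - 1 : ℝ) : ℂ) by push_cast; ring,
      ← Complex.ofReal_cpow hx0, ← Complex.ofReal_cpow hx1]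
    push_cast; ring_nf
  rw [hB] at key
  have hG : Real.Gamma (a + b) ≠ 0 := (Real.Gamma_pos_of_pos (by linarith)).ne'
  have := key
  rw [← Complex.ofReal_add, Complex.Gamma_ofReal, Complex.Gamma_ofReal,
    Complex.Gamma_ofReal, ← Complex.ofReal_mul, ← Complex.ofReal_mul] at this
  have h2 : Real.Gamma a * Real.Gamma b
      = Real.Gamma (a + b) * ∫ x in (0:ℝ)..1, x ^ (a - 1) * (1 - x) ^ (b - 1) :=
    mod_cast this
  field_simp [h2]
  linarith [h2]

lemma conv_integrable {a b u t : ℝ} (ha : 0 < a) (hb : 0 < b) (hut : u < t) :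
    IntervalIntegrable (fun s => (t - s) ^ (a - 1) * (s - u) ^ (b - 1)) volume u t := by
  set c := t - u with hc
  have hc0 : 0 < c := sub_pos.mpr hut
  have h0 : IntervalIntegrable
      (fun x : ℝ => c ^ (a-1) * c ^ (b-1) * (x ^ (b - 1) * (1 - x) ^ (a - 1)))
      volume 0 1 := (beta_integrable hb ha).const_mul _
  have hφ : IntervalIntegrable
      (fun x : ℝ => (t - (u + c * x)) ^ (a - 1) * ((u + c * x) - u) ^ (b - 1))
      volume 0 1 := by
    refine ⟨h0.1.congr ?_, by simp [IntegrableOn]⟩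
    filter_upwards [ae_restrict_mem measurableSet_Ioc] with x hx
    have hx0 : (0:ℝ) ≤ x := hx.1.le
    have hx1 : (0:ℝ) ≤ 1 - x := by linarith [hx.2]
    have e1 : t - (u + c * x) = c * (1 - x) := by rw [hc]; ring
    have e2 : (u + c * x) - u = c * x := by ring
    rw [e1, e2, Real.mul_rpow hc0.le hx1, Real.mul_rpow hc0.le hx0]
    ring
  have h1 := hφ.comp_mul_left (c := c⁻¹)
  simp only [mul_inv_cancel_left₀ hc0.ne', zero_div, one_div, inv_inv] at h1
  have h2 := h1.comp_sub_right u
  have efun : (fun x : ℝ => (t - (u + (x - u))) ^ (a - 1) * ((u + (x - u)) - u) ^ (b - 1))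
      = fun x : ℝ => (t - x) ^ (a - 1) * (x - u) ^ (b - 1) := by
    funext x; congr 2 <;> ring
  rw [efun] at h2
  have e0 : (0:ℝ) + u = u := by ring
  have e1 : c + u = t := by rw [hc]; ring
  rwa [e0, e1] at h2

lemma conv_value {a b u t : ℝ} (ha : 0 < a) (hb : 0 < b) (hut : u < t) :
    ∫ s in u..t, (t - s) ^ (a - 1) * (s - u) ^ (b - 1)
      = Real.Gamma a * Real.Gamma b / Real.Gamma (a + b) * (t - u) ^ (a + b - 1) := by
  set c := t - u with hc
  have hc0 : 0 < c := sub_pos.mpr hut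
  have key := integral_comp_add_mul (a := (0:ℝ)) (b := 1)
      (fun s => (t - s) ^ (a - 1) * (s - u) ^ (b - 1)) hc0.ne' u
  simp only [mul_zero, add_zero, mul_one] at key
  have ht' : u + c = t := by rw [hc]; ring
  rw [ht'] at key
  have congr1 : ∫ x in (0:ℝ)..1, (t - (u + c * x)) ^ (a - 1) * ((u + c * x) - u) ^ (b - 1)
      = ∫ x in (0:ℝ)..1, c ^ (a-1) * c ^ (b-1) * (x ^ (b - 1) * (1 - x) ^ (a - 1)) := by
    refine intervalIntegral.integral_congr fun x hx => ?_
    rw [Set.uIcc_of_le (by norm_num : (0:ℝ) ≤ 1)] at hx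
    have hx0 : (0:ℝ) ≤ x := hx.1
    have hx1 : (0:ℝ) ≤ 1 - x := by linarith [hx.2]
    have e1 : t - (u + c * x) = c * (1 - x) := by rw [hc]; ring
    have e2 : (u + c * x) - u = c * x := by ring
    rw [e1, e2, Real.mul_rpow hc0.le hx1, Real.mul_rpow hc0.le hx0]
    ring
  rw [congr1, intervalIntegral.integral_const_mul, beta_value hb ha] at key
  have hval : (∫ s in u..t, (t - s) ^ (a - 1) * (s - u) ^ (b - 1))
      = c * (c ^ (a-1) * c ^ (b-1) * (Real.Gamma b * Real.Gamma a / Real.Gamma (b + a))) := by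
    rw [key, smul_eq_mul, ← mul_assoc, mul_inv_cancel₀ hc0.ne', one_mul]
  have hpow : c * (c ^ (a-1) * c ^ (b-1)) = c ^ (a + b - 1) := by
    rw [← Real.rpow_add hc0]
    nth_rewrite 1 [← Real.rpow_one c]
    rw [← Real.rpow_add hc0]
    congr 1; ring
  rw [hval, show Real.Gamma b * Real.Gamma a / Real.Gamma (b + a)
      = Real.Gamma a * Real.Gamma b / Real.Gamma (a + b) by rw [add_comm b a, mul_comm],
    ← mul_assoc, hpow, mul_comm]

lemma ker_lintegral {c t : ℝ} (hc : 0 < c) (ht : 0 ≤ t) :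
    ∫⁻ s in Set.Ioc 0 t, ENNReal.ofReal ((t - s) ^ (c - 1))
      = ENNReal.ofReal (t ^ c / c) := by
  have hInt : IntervalIntegrable (fun s : ℝ => (t - s) ^ (c - 1)) volume 0 t := by
    have h := (intervalIntegral.intervalIntegrable_rpow' (a := 0) (b := t)
      (by linarith : (-1:ℝ) < c - 1)).comp_sub_left t
    simpa using h.symm
  have hval : ∫ s in (0:ℝ)..t, (t - s) ^ (c - 1) = t ^ c / c := by
    rw [intervalIntegral.integral_comp_sub_left (fun y : ℝ => y ^ (c - 1)) t]
    simp only [sub_zero, sub_self]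
    rw [integral_rpow (Or.inl (by linarith : (-1:ℝ) < c - 1))]
    rw [Real.zero_rpow (by linarith : c - 1 + 1 ≠ 0)]
    ring_nf
  have h0 : (fun _ : ℝ => (0:ℝ)) ≤ᵐ[volume.restrict (Set.Ioc 0 t)] fun s => (t - s) ^ (c - 1) := by
    filter_upwards [ae_restrict_mem measurableSet_Ioc] with s hs
    exact Real.rpow_nonneg (by linarith [hs.2]) _
  have hIn : Integrable (fun s : ℝ => (t - s) ^ (c - 1)) (volume.restrict (Set.Ioc 0 t)) := by
    rw [intervalIntegrable_iff] at hInt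
    rwa [Set.uIoc_of_le ht] at hInt
  rw [← ofReal_integral_eq_lintegral_ofReal hIn h0, ← hval,
    intervalIntegral.integral_of_le ht]

lemma conv_lintegral {a b u t : ℝ} (ha : 0 < a) (hb : 0 < b) (hut : u < t) :
    ∫⁻ s in Set.Ioc u t, ENNReal.ofReal ((t - s) ^ (a - 1)) * ENNReal.ofReal ((s - u) ^ (b - 1))
      = ENNReal.ofReal (Real.Gamma a * Real.Gamma b / Real.Gamma (a + b) * (t - u) ^ (a + b - 1)) := by
  have hIn : Integrable (fun s : ℝ => (t - s) ^ (a - 1) * (s - u) ^ (b - 1))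
      (volume.restrict (Set.Ioc u t)) := by
    have := conv_integrable ha hb hut
    rw [intervalIntegrable_iff, Set.uIoc_of_le hut.le] at this
    exact this
  have h0 : (fun _ : ℝ => (0:ℝ)) ≤ᵐ[volume.restrict (Set.Ioc u t)]
      fun s => (t - s) ^ (a - 1) * (s - u) ^ (b - 1) := by
    filter_upwards [ae_restrict_mem measurableSet_Ioc] with s hs
    exact mul_nonneg (Real.rpow_nonneg (by linarith [hs.2]) _)
      (Real.rpow_nonneg (by linarith [hs.1]) _)
  have hcongr : ∫⁻ s in Set.Ioc u t,
        ENNReal.ofReal ((t - s) ^ (a - 1)) * ENNReal.ofReal ((s - u) ^ (b - 1))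
      = ∫⁻ s in Set.Ioc u t, ENNReal.ofReal ((t - s) ^ (a - 1) * (s - u) ^ (b - 1)) := by
    refine lintegral_congr_ae ?_
    filter_upwards [ae_restrict_mem measurableSet_Ioc] with s hs
    rw [ENNReal.ofReal_mul (Real.rpow_nonneg (by linarith [hs.2]) _)]
  rw [hcongr, ← ofReal_integral_eq_lintegral_ofReal hIn h0,
    ← intervalIntegral.integral_of_le hut.le, conv_value ha hb hut]

lemma step_bound {β t T κ c₁ : ℝ} (hβ : 0 < β) (hκ : 0 < κ) (hc₁ : 0 < c₁) (f : ℝ → ℝ)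
    (ht : t ∈ Set.Icc (0:ℝ) T)
    (hmeas : AEMeasurable f (volume.restrict (Set.Ioc 0 t)))
    (hA : ∀ s ∈ Set.Icc (0:ℝ) T, ENNReal.ofReal (f s)
      ≤ ENNReal.ofReal c₁ + ENNReal.ofReal κ
          * ∫⁻ u in Set.Ioc 0 s, ENNReal.ofReal ((s - u) ^ (β - 1)) * ENNReal.ofReal (f u))
    {A : ℝ} (hA0 : 0 < A) :
    ∫⁻ s in Set.Ioc 0 t, ENNReal.ofReal ((t - s) ^ (A - 1)) * ENNReal.ofReal (f s)
      ≤ ENNReal.ofReal (c₁ * (t ^ A / A))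
        + ENNReal.ofReal (κ * (Real.Gamma A * Real.Gamma β / Real.Gamma (A + β)))
          * ∫⁻ u in Set.Ioc 0 t, ENNReal.ofReal ((t - u) ^ (A + β - 1)) * ENNReal.ofReal (f u) := by
  set μ := volume.restrict (Set.Ioc 0 t) with hμ
  set F : ℝ → ℝ≥0∞ := fun s => ENNReal.ofReal (f s) with hF
  set K : ℝ → ℝ≥0∞ := fun s => ENNReal.ofReal ((t - s) ^ (A - 1)) with hK
  set G : ℝ → ℝ≥0∞ := fun s => ∫⁻ u in Set.Ioc 0 s, ENNReal.ofReal ((s - u) ^ (β - 1)) * F u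
    with hG
  have hKmeas : Measurable K :=
    ((measurable_const.sub measurable_id).pow measurable_const).ennreal_ofReal
  have step1 : ∫⁻ s, K s * F s ∂μ
      ≤ ∫⁻ s, (K s * ENNReal.ofReal c₁ + ENNReal.ofReal κ * (K s * G s)) ∂μ := by
    refine lintegral_mono_ae ?_
    filter_upwards [ae_restrict_mem measurableSet_Ioc] with s hs
    have hsIcc : s ∈ Set.Icc (0:ℝ) T := ⟨hs.1.le, hs.2.trans ht.2⟩
    calc K s * F s ≤ K s * (ENNReal.ofReal c₁ + ENNReal.ofReal κ * G s) :=
          mul_le_mul_right (hA s hsIcc) _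
      _ = K s * ENNReal.ofReal c₁ + ENNReal.ofReal κ * (K s * G s) := by ring
  have step2 : ∫⁻ s, (K s * ENNReal.ofReal c₁ + ENNReal.ofReal κ * (K s * G s)) ∂μ
      = ∫⁻ s, K s * ENNReal.ofReal c₁ ∂μ + ∫⁻ s, ENNReal.ofReal κ * (K s * G s) ∂μ :=
    lintegral_add_left (hKmeas.mul_const _) _
  have step3 : ∫⁻ s, K s * ENNReal.ofReal c₁ ∂μ = ENNReal.ofReal (c₁ * (t ^ A / A)) := by
    rw [lintegral_mul_const' _ _ ENNReal.ofReal_ne_top, hμ, ker_lintegral hA0 ht.1,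
      ← ENNReal.ofReal_mul (div_nonneg (Real.rpow_nonneg ht.1 _) hA0.le), mul_comm (t ^ A / A) c₁]
  have step4 : ∫⁻ s, ENNReal.ofReal κ * (K s * G s) ∂μ
      = ENNReal.ofReal κ * ∫⁻ s, K s * G s ∂μ :=
    lintegral_const_mul' _ _ ENNReal.ofReal_ne_top
  -- Tonelli
  set V : ℝ → ℝ → ℝ≥0∞ := fun s u => {q : ℝ × ℝ | q.2 < q.1}.indicator
    (fun q => K q.1 * (ENNReal.ofReal ((q.1 - q.2) ^ (β - 1)) * F q.2)) (s, u) with hV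
  have hVmeas : AEMeasurable (Function.uncurry V) (μ.prod μ) := by
    have h1 : Measurable fun p : ℝ × ℝ => K p.1 := hKmeas.comp measurable_fst
    have h2 : Measurable fun p : ℝ × ℝ => ENNReal.ofReal ((p.1 - p.2) ^ (β - 1)) :=
      ((measurable_fst.sub measurable_snd).pow measurable_const).ennreal_ofReal
    have h3 : AEMeasurable (fun p : ℝ × ℝ => F p.2) (μ.prod μ) :=
      (hmeas.ennreal_ofReal).comp_snd
    have h4 : AEMeasurable (fun p : ℝ × ℝ => K p.1
        * (ENNReal.ofReal ((p.1 - p.2) ^ (β - 1)) * F p.2)) (μ.prod μ) :=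
      h1.aemeasurable.mul (h2.aemeasurable.mul h3)
    exact (h4.indicator (measurableSet_lt measurable_snd measurable_fst))
  have hL : ∫⁻ s, K s * G s ∂μ = ∫⁻ s, ∫⁻ u, V s u ∂μ ∂μ := by
    refine lintegral_congr_ae ?_
    filter_upwards [ae_restrict_mem measurableSet_Ioc] with s hs
    have hpt : ∀ u, V s u = (Set.Iio s).indicator
        (fun u => K s * (ENNReal.ofReal ((s - u) ^ (β - 1)) * F u)) u := by
      intro u
      by_cases h : u < s <;> simp [hV, Set.indicator_apply, h]
    rw [lintegral_congr hpt, lintegral_indicator measurableSet_Iio, hμ,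
      Measure.restrict_restrict measurableSet_Iio]
    have hset : Set.Iio s ∩ Set.Ioc 0 t = Set.Ioo 0 s := by
      ext u
      constructor
      · rintro ⟨h1, h2, _⟩; exact ⟨h2, h1⟩
      · rintro ⟨h1, h2⟩; exact ⟨h2, h1, (h2.trans_le hs.2).le⟩
    rw [hset, lintegral_const_mul' _ _ ENNReal.ofReal_ne_top,
      Measure.restrict_congr_set MeasureTheory.Ioo_ae_eq_Ioc]
  have hne_t : ∀ᵐ u ∂μ, u ≠ t := by
    have h1 : μ {t} = 0 := by
      rw [hμ, Measure.restrict_apply (measurableSet_singleton t)]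
      exact measure_mono_null Set.inter_subset_left (measure_singleton t)
    rw [ae_iff]
    refine measure_mono_null (fun u hu => ?_) h1
    simp only [ne_eq, not_not, Set.mem_setOf_eq] at hu
    simp [hu]
  have hB0 : (0:ℝ) ≤ Real.Gamma A * Real.Gamma β / Real.Gamma (A + β) :=
    le_of_lt (div_pos (mul_pos (Real.Gamma_pos_of_pos hA0) (Real.Gamma_pos_of_pos hβ))
      (Real.Gamma_pos_of_pos (by linarith)))
  have hR : ∫⁻ u, ∫⁻ s, V s u ∂μ ∂μ
      = ∫⁻ u in Set.Ioc 0 t, ENNReal.ofReal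
          (Real.Gamma A * Real.Gamma β / Real.Gamma (A + β) * (t - u) ^ (A + β - 1)) * F u := by
    refine lintegral_congr_ae ?_
    filter_upwards [ae_restrict_mem measurableSet_Ioc, hne_t] with u hu hu'
    have hut : u < t := lt_of_le_of_ne hu.2 hu'
    have hpt : ∀ s, V s u = (Set.Ioi u).indicator
        (fun s => (K s * ENNReal.ofReal ((s - u) ^ (β - 1))) * F u) s := by
      intro s
      by_cases h : u < s <;> simp [hV, Set.indicator_apply, h, Set.mem_Ioi, mul_assoc]
    rw [lintegral_congr hpt, lintegral_indicator measurableSet_Ioi, hμ,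
      Measure.restrict_restrict measurableSet_Ioi]
    have hset : Set.Ioi u ∩ Set.Ioc 0 t = Set.Ioc u t := by
      ext s
      constructor
      · rintro ⟨h1, _, h3⟩; exact ⟨h1, h3⟩
      · rintro ⟨h1, h2⟩; exact ⟨h1, hu.1.trans h1, h2⟩
    rw [hset, lintegral_mul_const' _ _ ENNReal.ofReal_ne_top]
    congr 1
    simp only [hK]
    exact conv_lintegral hA0 hβ hut
  have hsplit : ∫⁻ u in Set.Ioc 0 t, ENNReal.ofReal
        (Real.Gamma A * Real.Gamma β / Real.Gamma (A + β) * (t - u) ^ (A + β - 1)) * F u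
      = ENNReal.ofReal (Real.Gamma A * Real.Gamma β / Real.Gamma (A + β))
        * ∫⁻ u in Set.Ioc 0 t, ENNReal.ofReal ((t - u) ^ (A + β - 1)) * F u := by
    rw [← lintegral_const_mul' _ _ ENNReal.ofReal_ne_top]
    refine lintegral_congr fun u => ?_
    rw [ENNReal.ofReal_mul hB0, mul_assoc]
  calc ∫⁻ s in Set.Ioc 0 t, ENNReal.ofReal ((t - s) ^ (A - 1)) * ENNReal.ofReal (f s)
      = ∫⁻ s, K s * F s ∂μ := rfl
    _ ≤ _ := step1
    _ = ∫⁻ s, K s * ENNReal.ofReal c₁ ∂μ + ∫⁻ s, ENNReal.ofReal κ * (K s * G s) ∂μ := step2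
    _ = ENNReal.ofReal (c₁ * (t ^ A / A))
        + ENNReal.ofReal κ * (ENNReal.ofReal (Real.Gamma A * Real.Gamma β / Real.Gamma (A + β))
          * ∫⁻ u in Set.Ioc 0 t, ENNReal.ofReal ((t - u) ^ (A + β - 1)) * F u) := by
      rw [step3, step4, hL, lintegral_lintegral_swap hVmeas, hR, hsplit]
    _ = ENNReal.ofReal (c₁ * (t ^ A / A))
        + ENNReal.ofReal (κ * (Real.Gamma A * Real.Gamma β / Real.Gamma (A + β)))
          * ∫⁻ u in Set.Ioc 0 t, ENNReal.ofReal ((t - u) ^ (A + β - 1)) * F u := by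
      rw [ENNReal.ofReal_mul hκ.le, mul_assoc]

theorem renewal_iterated_upper (β T κ c₁ : ℝ) (hβ : 0 < β) (hT : 0 < T) (hκ : 0 < κ)
    (hc₁ : 0 < c₁) (f : ℝ → ℝ)
    (hf_nonneg : ∀ t ∈ Set.Icc (0 : ℝ) T, 0 ≤ f t)
    (hf_int : IntegrableOn f (Set.Icc (0 : ℝ) T))
    (hf : ∀ t ∈ Set.Icc (0 : ℝ) T,
      f t ≤ c₁ + κ * ∫ s in (0 : ℝ)..t, (t - s) ^ (β - 1) * f s) :
    ∀ n : ℕ, 1 ≤ n → ∀ t ∈ Set.Icc (0 : ℝ) T,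
      f t ≤ c₁ * ∑ k ∈ Finset.range n,
          (κ * Real.Gamma β) ^ k * t ^ ((k : ℝ) * β) / Real.Gamma (k * β + 1)
        + (κ * Real.Gamma β) ^ n / Real.Gamma (n * β)
            * ∫ s in (0 : ℝ)..t, (t - s) ^ ((n : ℝ) * β - 1) * f s := by
  have hΓβ : 0 < Real.Gamma β := Real.Gamma_pos_of_pos hβ
  set S : ℕ → ℝ → ℝ := fun n t => ∑ k ∈ Finset.range n,
    (κ * Real.Gamma β) ^ k * t ^ ((k : ℝ) * β) / Real.Gamma ((k : ℝ) * β + 1) with hS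
  set C : ℕ → ℝ := fun n => (κ * Real.Gamma β) ^ n / Real.Gamma ((n : ℝ) * β) with hC
  have hS_nonneg : ∀ n : ℕ, ∀ t : ℝ, 0 ≤ t → 0 ≤ S n t := by
    intro n t ht
    refine Finset.sum_nonneg fun k _ => ?_
    have h1 : (0:ℝ) < Real.Gamma ((k : ℝ) * β + 1) :=
      Real.Gamma_pos_of_pos (by positivity)
    positivity
  have hS_ge_one : ∀ n : ℕ, 1 ≤ n → ∀ t : ℝ, 0 ≤ t → 1 ≤ S n t := by
    intro n hn t ht
    have h0 : (κ * Real.Gamma β) ^ 0 * t ^ ((0 : ℝ) * β) / Real.Gamma ((0 : ℝ) * β + 1)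
        = 1 := by
      norm_num [Real.Gamma_one, Real.rpow_zero]
    calc (1:ℝ) = (κ * Real.Gamma β) ^ 0 * t ^ (((0:ℕ) : ℝ) * β)
          / Real.Gamma (((0:ℕ) : ℝ) * β + 1) := by push_cast; rw [h0]
      _ ≤ S n t := by
        refine Finset.single_le_sum (f := fun k : ℕ => (κ * Real.Gamma β) ^ k
          * t ^ ((k : ℝ) * β) / Real.Gamma ((k : ℝ) * β + 1)) (fun k _ => ?_)
          (Finset.mem_range.2 hn)
        have h1 : (0:ℝ) < Real.Gamma ((k : ℝ) * β + 1) :=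
          Real.Gamma_pos_of_pos (by positivity)
        positivity
  have hC_nonneg : ∀ n : ℕ, 1 ≤ n → 0 ≤ C n := by
    intro n hn
    have h1 : (0:ℝ) < Real.Gamma ((n : ℝ) * β) := by
      refine Real.Gamma_pos_of_pos ?_
      have : (1:ℝ) ≤ (n:ℝ) := by exact_mod_cast hn
      nlinarith
    positivity
  have hmeasf : ∀ t : ℝ, t ∈ Set.Icc (0:ℝ) T →
      AEMeasurable f (volume.restrict (Set.Ioc 0 t)) := by
    intro t ht
    have hsub : Set.Ioc (0:ℝ) t ⊆ Set.Icc 0 T := fun s hs => ⟨hs.1.le, hs.2.trans ht.2⟩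
    exact (hf_int.aestronglyMeasurable.aemeasurable).mono_measure
      (Measure.restrict_mono hsub le_rfl)
  -- lintegral form of the hypothesis
  have hA : ∀ s ∈ Set.Icc (0:ℝ) T, ENNReal.ofReal (f s)
      ≤ ENNReal.ofReal c₁ + ENNReal.ofReal κ
          * ∫⁻ u in Set.Ioc 0 s, ENNReal.ofReal ((s - u) ^ (β - 1)) * ENNReal.ofReal (f u) := by
    intro s hs
    set g : ℝ → ℝ := fun u => (s - u) ^ (β - 1) * f u with hg
    have hgm : AEStronglyMeasurable g (volume.restrict (Set.Ioc 0 s)) :=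
      (((measurable_const.sub measurable_id).pow measurable_const).aestronglyMeasurable).mul
        (hmeasf s hs).aestronglyMeasurable
    have hgnn : (fun _ : ℝ => (0:ℝ)) ≤ᵐ[volume.restrict (Set.Ioc 0 s)] g := by
      filter_upwards [ae_restrict_mem measurableSet_Ioc] with u hu
      exact mul_nonneg (Real.rpow_nonneg (by linarith [hu.2]) _)
        (hf_nonneg u ⟨hu.1.le, hu.2.trans hs.2⟩)
    have hsplit : ∫⁻ u in Set.Ioc 0 s, ENNReal.ofReal ((s - u) ^ (β - 1))
          * ENNReal.ofReal (f u)
        = ∫⁻ u in Set.Ioc 0 s, ENNReal.ofReal (g u) := by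
      refine lintegral_congr_ae ?_
      filter_upwards [ae_restrict_mem measurableSet_Ioc] with u hu
      rw [hg, ← ENNReal.ofReal_mul (Real.rpow_nonneg (by linarith [hu.2]) _)]
    by_cases hint : IntegrableOn g (Set.Ioc 0 s)
    · have heq : ENNReal.ofReal (∫ u in Set.Ioc 0 s, g u)
          = ∫⁻ u in Set.Ioc 0 s, ENNReal.ofReal (g u) :=
        ofReal_integral_eq_lintegral_ofReal hint hgnn
      have h1 := hf s hs
      rw [intervalIntegral.integral_of_le hs.1] at h1
      have hint_nn : 0 ≤ ∫ u in Set.Ioc 0 s, g u := integral_nonneg_of_ae hgnn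
      calc ENNReal.ofReal (f s) ≤ ENNReal.ofReal (c₁ + κ * ∫ u in Set.Ioc 0 s, g u) :=
            ENNReal.ofReal_le_ofReal h1
        _ = ENNReal.ofReal c₁ + ENNReal.ofReal κ
              * ENNReal.ofReal (∫ u in Set.Ioc 0 s, g u) := by
            rw [ENNReal.ofReal_add hc₁.le (mul_nonneg hκ.le hint_nn),
              ENNReal.ofReal_mul hκ.le]
        _ = _ := by rw [heq, hsplit]
    · have hinf : ∫⁻ u in Set.Ioc 0 s, ENNReal.ofReal (g u) = ∞ := by
        by_contra hfin
        exact hint ⟨hgm, (hasFiniteIntegral_iff_ofReal hgnn).2 (lt_top_iff_ne_top.2 hfin)⟩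
      rw [hsplit, hinf, ENNReal.mul_top (ENNReal.ofReal_pos.2 hκ).ne']
      exact le_top
  -- the iteration, in the extended nonnegative reals
  have hP : ∀ m : ℕ, ∀ t ∈ Set.Icc (0:ℝ) T,
      ENNReal.ofReal (f t) ≤ ENNReal.ofReal (c₁ * S (m+1) t) + ENNReal.ofReal (C (m+1))
        * ∫⁻ s in Set.Ioc 0 t,
            ENNReal.ofReal ((t - s) ^ (((m+1 : ℕ) : ℝ) * β - 1)) * ENNReal.ofReal (f s) := by
    intro m
    induction m with
    | zero =>
      intro t ht
      have e1 : c₁ * S 1 t = c₁ := by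
        rw [hS]
        simp [Finset.sum_range_one, Real.rpow_zero, Real.Gamma_one]
      have e2 : C 1 = κ := by
        rw [hC]
        simp only [Nat.cast_one, one_mul, pow_one]
        field_simp
      have e3 : ((0+1 : ℕ) : ℝ) * β - 1 = β - 1 := by push_cast; ring
      rw [e1, e2, e3]
      exact hA t ht
    | succ m ih =>
      intro t ht
      have h1 := ih t ht
      set A : ℝ := ((m+1 : ℕ) : ℝ) * β with hA_def
      have hmpos : (0:ℝ) < ((m+1 : ℕ) : ℝ) := by exact_mod_cast Nat.succ_pos m
      have hA0 : 0 < A := mul_pos hmpos hβ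
      have hΓA : (0:ℝ) < Real.Gamma A := Real.Gamma_pos_of_pos hA0
      have hΓAβ : (0:ℝ) < Real.Gamma (A + β) := Real.Gamma_pos_of_pos (by linarith)
      have hstep := step_bound hβ hκ hc₁ f ht (hmeasf t ht) hA hA0
      have hCnn : 0 ≤ C (m+1) := hC_nonneg (m+1) (Nat.succ_le_succ (Nat.zero_le m))
      calc ENNReal.ofReal (f t)
          ≤ ENNReal.ofReal (c₁ * S (m+1) t) + ENNReal.ofReal (C (m+1))
            * ∫⁻ s in Set.Ioc 0 t,
                ENNReal.ofReal ((t - s) ^ (A - 1)) * ENNReal.ofReal (f s) := h1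
        _ ≤ ENNReal.ofReal (c₁ * S (m+1) t) + ENNReal.ofReal (C (m+1))
            * (ENNReal.ofReal (c₁ * (t ^ A / A))
              + ENNReal.ofReal (κ * (Real.Gamma A * Real.Gamma β / Real.Gamma (A + β)))
                * ∫⁻ u in Set.Ioc 0 t,
                    ENNReal.ofReal ((t - u) ^ (A + β - 1)) * ENNReal.ofReal (f u)) :=
            add_le_add_right (mul_le_mul_right hstep _) _
        _ = ENNReal.ofReal (c₁ * S (m+1+1) t) + ENNReal.ofReal (C (m+1+1))
            * ∫⁻ s in Set.Ioc 0 t,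
                ENNReal.ofReal ((t - s) ^ (((m+1+1 : ℕ) : ℝ) * β - 1))
                  * ENNReal.ofReal (f s) := by
            have eexp : A + β - 1 = ((m+1+1 : ℕ) : ℝ) * β - 1 := by
              rw [hA_def]; push_cast; ring
            rw [mul_add, ← mul_assoc, ← ENNReal.ofReal_mul hCnn, ← ENNReal.ofReal_mul hCnn,
              ← add_assoc, ← ENNReal.ofReal_add (mul_nonneg hc₁.le (hS_nonneg (m+1) t ht.1)) ?hnn, eexp]
            case hnn =>
              have h1 : (0:ℝ) ≤ t ^ A / A := div_nonneg (Real.rpow_nonneg ht.1 _) hA0.le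
              positivity
            congr 2
            · -- real arithmetic for the sums
              have hsum : S (m+1+1) t = S (m+1) t
                  + (κ * Real.Gamma β) ^ (m+1) * t ^ A / Real.Gamma (A + 1) := by
                rw [hS]
                simp only [Finset.sum_range_succ]
                rfl
              rw [hsum, Real.Gamma_add_one hA0.ne']
              have hCval : C (m+1) = (κ * Real.Gamma β) ^ (m+1) / Real.Gamma A := by
                rw [hC]
              rw [hCval]
              field_simp
            · -- real arithmetic for the constants
              have hC1 : C (m+1) = (κ * Real.Gamma β) ^ (m+1) / Real.Gamma A := by rw [hC]
              have hC2 : C (m+1+1) = (κ * Real.Gamma β) ^ (m+1+1) / Real.Gamma (A + β) := by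
                rw [hC]
                congr 2
                rw [hA_def]; push_cast; ring
              rw [hC1, hC2, pow_succ]
              field_simp
              ring
  -- back to real integrals
  intro n hn t ht
  obtain ⟨m, rfl⟩ : ∃ m, n = m + 1 := ⟨n - 1, (Nat.succ_pred_eq_of_pos hn).symm⟩
  have h1 := hP m t ht
  set a : ℝ := ((m+1 : ℕ) : ℝ) * β with ha_def
  have hmpos : (0:ℝ) < ((m+1 : ℕ) : ℝ) := by exact_mod_cast Nat.succ_pos m
  have ha0 : 0 < a := mul_pos hmpos hβ
  have hnn_a : (fun _ : ℝ => (0:ℝ)) ≤ᵐ[volume.restrict (Set.Ioc 0 t)]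
      fun s => (t - s) ^ (a - 1) * f s := by
    filter_upwards [ae_restrict_mem measurableSet_Ioc] with u hu
    exact mul_nonneg (Real.rpow_nonneg (by linarith [hu.2]) _)
      (hf_nonneg u ⟨hu.1.le, hu.2.trans ht.2⟩)
  have hma : AEStronglyMeasurable (fun s => (t - s) ^ (a - 1) * f s)
      (volume.restrict (Set.Ioc 0 t)) :=
    (((measurable_const.sub measurable_id).pow measurable_const).aestronglyMeasurable).mul
      (hmeasf t ht).aestronglyMeasurable
  have hsplit : (∫⁻ s in Set.Ioc 0 t,
        ENNReal.ofReal ((t - s) ^ (a - 1)) * ENNReal.ofReal (f s))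
      = ∫⁻ s in Set.Ioc 0 t, ENNReal.ofReal ((t - s) ^ (a - 1) * f s) := by
    refine lintegral_congr_ae ?_
    filter_upwards [ae_restrict_mem measurableSet_Ioc] with u hu
    rw [← ENNReal.ofReal_mul (Real.rpow_nonneg (by linarith [hu.2]) _)]
  have hCnn : 0 ≤ C (m+1) := hC_nonneg (m+1) (Nat.succ_le_succ (Nat.zero_le m))
  have hSnn : 0 ≤ S (m+1) t := hS_nonneg (m+1) t ht.1
  by_cases hint : IntegrableOn (fun s => (t - s) ^ (a - 1) * f s) (Set.Ioc 0 t)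
  · have heq : ENNReal.ofReal (∫ s in Set.Ioc 0 t, (t - s) ^ (a - 1) * f s)
        = ∫⁻ s in Set.Ioc 0 t, ENNReal.ofReal ((t - s) ^ (a - 1) * f s) :=
      ofReal_integral_eq_lintegral_ofReal hint hnn_a
    have hInn : 0 ≤ ∫ s in Set.Ioc 0 t, (t - s) ^ (a - 1) * f s := integral_nonneg_of_ae hnn_a
    have h2 : ENNReal.ofReal (f t) ≤ ENNReal.ofReal (c₁ * S (m+1) t
        + C (m+1) * ∫ s in Set.Ioc 0 t, (t - s) ^ (a - 1) * f s) := by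
      rw [ENNReal.ofReal_add (by positivity) (mul_nonneg hCnn hInn),
        ENNReal.ofReal_mul hCnn, heq, ← hsplit]
      exact h1
    have h3 := (ENNReal.ofReal_le_ofReal_iff (by positivity)).1 h2
    rw [intervalIntegral.integral_of_le ht.1]
    exact h3
  · -- degenerate case: the kernel integral is not defined, hence `0` in Lean
    have hnnβ : (fun _ : ℝ => (0:ℝ)) ≤ᵐ[volume.restrict (Set.Ioc 0 t)]
        fun s => (t - s) ^ (β - 1) * f s := by
      filter_upwards [ae_restrict_mem measurableSet_Ioc] with u hu
      exact mul_nonneg (Real.rpow_nonneg (by linarith [hu.2]) _)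
        (hf_nonneg u ⟨hu.1.le, hu.2.trans ht.2⟩)
    have hne_t : ∀ᵐ u ∂(volume.restrict (Set.Ioc 0 t)), u ≠ t := by
      have hmt : (volume.restrict (Set.Ioc 0 t)) {t} = 0 := by
        rw [Measure.restrict_apply (measurableSet_singleton t)]
        exact measure_mono_null Set.inter_subset_left (measure_singleton t)
      rw [ae_iff]
      refine measure_mono_null (fun u hu => ?_) hmt
      simp only [ne_eq, not_not, Set.mem_setOf_eq] at hu
      simp [hu]
    have hintβ : ¬ IntegrableOn (fun s => (t - s) ^ (β - 1) * f s) (Set.Ioc 0 t) := by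
      intro hβint
      apply hint
      have hfin : (∫⁻ s in Set.Ioc 0 t,
          ENNReal.ofReal ((t - s) ^ (β - 1) * f s)) < ∞ :=
        (hasFiniteIntegral_iff_ofReal hnnβ).1 hβint.2
      refine ⟨hma, (hasFiniteIntegral_iff_ofReal hnn_a).2 ?_⟩
      calc (∫⁻ s in Set.Ioc 0 t, ENNReal.ofReal ((t - s) ^ (a - 1) * f s))
          ≤ ∫⁻ s in Set.Ioc 0 t,
              ENNReal.ofReal (T ^ (a - β)) * ENNReal.ofReal ((t - s) ^ (β - 1) * f s) := by
            refine lintegral_mono_ae ?_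
            filter_upwards [ae_restrict_mem measurableSet_Ioc, hne_t] with u hu hu'
            have hut : u < t := lt_of_le_of_ne hu.2 hu'
            have htu : (0:ℝ) < t - u := by linarith
            have hexp : (t - u) ^ (a - 1) = (t - u) ^ (a - β) * (t - u) ^ (β - 1) := by
              rw [← Real.rpow_add htu]; congr 1; ring
            rw [← ENNReal.ofReal_mul (Real.rpow_nonneg (by positivity) _)]
            refine ENNReal.ofReal_le_ofReal ?_
            rw [hexp, mul_assoc]
            refine mul_le_mul_of_nonneg_right ?_
              (mul_nonneg (Real.rpow_nonneg htu.le _)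
                (hf_nonneg u ⟨hu.1.le, hu.2.trans ht.2⟩))
            refine Real.rpow_le_rpow htu.le (by linarith [ht.2, hu.1]) ?_
            have : (1:ℝ) ≤ ((m+1 : ℕ) : ℝ) := by exact_mod_cast Nat.succ_le_succ (Nat.zero_le m)
            rw [ha_def]; nlinarith
        _ = ENNReal.ofReal (T ^ (a - β)) * ∫⁻ s in Set.Ioc 0 t,
              ENNReal.ofReal ((t - s) ^ (β - 1) * f s) :=
            lintegral_const_mul' _ _ ENNReal.ofReal_ne_top
        _ < ∞ := ENNReal.mul_lt_top ENNReal.ofReal_lt_top hfin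
    have hzero1 : (∫ s in (0:ℝ)..t, (t - s) ^ (β - 1) * f s) = 0 := by
      refine intervalIntegral.integral_undef (fun h => hintβ ?_)
      rwa [intervalIntegrable_iff, Set.uIoc_of_le ht.1] at h
    have hzero2 : (∫ s in (0:ℝ)..t, (t - s) ^ (a - 1) * f s) = 0 := by
      refine intervalIntegral.integral_undef (fun h => hint ?_)
      rwa [intervalIntegrable_iff, Set.uIoc_of_le ht.1] at h
    have hft : f t ≤ c₁ := by
      have h4 := hf t ht
      rwa [hzero1, mul_zero, add_zero] at h4
    rw [hzero2, mul_zero, add_zero]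
    calc f t ≤ c₁ := hft
      _ = c₁ * 1 := (mul_one c₁).symm
      _ ≤ c₁ * S (m+1) t := by
          refine mul_le_mul_of_nonneg_left ?_ hc₁.le
          exact hS_ge_one (m+1) (Nat.succ_le_succ (Nat.zero_le m)) t ht.1
end
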